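/- Let a > 0, γ ∈ [0,1), b ∈ (0,1), α > 0 with α ≠ 1 and 2−α−γ ≠ 0, and x̄ > 0. Let T = (x̄^{1−γ} − (b x̄)^{1−γ})/(a(1−γ)) and x(t) = ((b x̄)^{1−γ} + a(1−γ)t)^{1/(1−γ)} for t ∈ [0,T]. Then (1/T)·∫₀^T x(t)^{1−α}/(1−α) dt = x̄^{1−α} · (1−b^{2−α−γ})(1−γ) / ((1−α)(2−α−γ)(1−b^{1−γ})). -/

import Mathlib

/-- Under the threshold policy with threshold `x̄`, the time average of the
α-fairness utility `x^(1-α)/(1-α)` over one G-AIMD cycle equals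
`x̄^(1-α) (1-b^(2-α-γ))(1-γ) / ((1-α)(2-α-γ)(1-b^(1-γ)))`. -/
theorem gaimd_cycle_average_fairness
    (a γ b α xbar : ℝ) (ha : 0 < a) (hγ : γ ∈ Set.Ico (0 : ℝ) 1)
    (hb : b ∈ Set.Ioo (0 : ℝ) 1) (hα : 0 < α) (hα1 : α ≠ 1)
    (hαγ : 2 - α - γ ≠ 0) (hxbar : 0 < xbar)
    (T : ℝ) (hT : T = (xbar ^ (1 - γ) - (b * xbar) ^ (1 - γ)) / (a * (1 - γ)))
    (x : ℝ → ℝ)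
    (hx : ∀ t : ℝ, x t = ((b * xbar) ^ (1 - γ) + a * (1 - γ) * t) ^ (1 / (1 - γ))) :
    (1 / T) * ∫ t in (0 : ℝ)..T, (x t) ^ (1 - α) / (1 - α)
      = xbar ^ (1 - α) * ((1 - b ^ (2 - α - γ)) * (1 - γ))
          / ((1 - α) * (2 - α - γ) * (1 - b ^ (1 - γ))) := by
  obtain ⟨hγ0, hγ1⟩ := hγ
  obtain ⟨hb0, hb1⟩ := hb
  have h1γ : (0:ℝ) < 1 - γ := by linarith
  have hα1' : (1:ℝ) - α ≠ 0 := by intro h; apply hα1; linarith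
  set c : ℝ := (b * xbar) ^ (1 - γ) with hc
  set k : ℝ := a * (1 - γ) with hk
  set X : ℝ := xbar ^ (1 - γ) with hX
  set q : ℝ := (1 - α) / (1 - γ) with hq
  have hq1 : q + 1 = (2 - α - γ) / (1 - γ) := by
    rw [hq]; field_simp; ring
  have hq1ne : q + 1 ≠ 0 := by
    rw [hq1]; exact div_ne_zero hαγ (ne_of_gt h1γ)
  have hbx : 0 < b * xbar := mul_pos hb0 hxbar
  have hcpos : 0 < c := Real.rpow_pos_of_pos hbx _
  have hXpos : 0 < X := Real.rpow_pos_of_pos hxbar _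
  have hkpos : 0 < k := mul_pos ha h1γ
  have hcX : c < X := by
    exact Real.rpow_lt_rpow (le_of_lt hbx) (by nlinarith) h1γ
  have hTpos : 0 < T := by
    rw [hT]; exact div_pos (by linarith) hkpos
  have hkT : k * T = X - c := by
    rw [hT]; field_simp
  have hpos : ∀ t ∈ Set.uIcc (0:ℝ) T, 0 < c + k * t := by
    intro t ht
    rw [Set.uIcc_of_le (le_of_lt hTpos)] at ht
    nlinarith [ht.1]
  have hintegrand : ∀ t ∈ Set.uIcc (0:ℝ) T,
      (x t) ^ (1 - α) / (1 - α) = (c + k * t) ^ q / (1 - α) := by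
    intro t ht
    rw [hx t]
    congr 1
    rw [← Real.rpow_mul (le_of_lt (hpos t ht))]
    congr 1
    rw [hq]; field_simp
  -- antiderivative
  set F : ℝ → ℝ := fun t => (c + k * t) ^ (q + 1) / (k * (q + 1) * (1 - α)) with hF
  have hderiv : ∀ t ∈ Set.uIcc (0:ℝ) T,
      HasDerivAt F ((x t) ^ (1 - α) / (1 - α)) t := by
    intro t ht
    have hg : HasDerivAt (fun t : ℝ => c + k * t) k t := by
      simpa using ((hasDerivAt_id t).const_mul k).const_add c
    have h1 : HasDerivAt (fun t : ℝ => (c + k * t) ^ (q + 1))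
        ((q + 1) * (c + k * t) ^ q * k) t := by
      have := (Real.hasDerivAt_rpow_const
        (x := c + k * t) (p := q + 1) (Or.inl (ne_of_gt (hpos t ht)))).comp t hg
      simpa [Function.comp_def, mul_comm, mul_assoc, add_sub_cancel_right] using this
    have h2 := h1.div_const (k * (q + 1) * (1 - α))
    rw [hintegrand t ht]
    refine h2.congr_deriv ?_
    have hkne' : k ≠ 0 := ne_of_gt hkpos
    rw [show (q + 1) * (c + k * t) ^ q * k = (k * (q + 1)) * (c + k * t) ^ q by ring,
      mul_div_mul_left _ _ (mul_ne_zero hkne' hq1ne)]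
  have hxcont : ContinuousOn x (Set.uIcc (0:ℝ) T) := by
    rw [funext hx]
    exact (continuous_const.add (continuous_const.mul continuous_id)).continuousOn.rpow_const
      (fun s hs => Or.inl (ne_of_gt (hpos s hs)))
  have hcont : IntervalIntegrable (fun t => (x t) ^ (1 - α) / (1 - α))
      MeasureTheory.volume (0 : ℝ) T := by
    apply ContinuousOn.intervalIntegrable
    apply ContinuousOn.div_const
    exact hxcont.rpow_const (fun t ht => Or.inl (by
      rw [hx t]; exact ne_of_gt (Real.rpow_pos_of_pos (hpos t ht) _)))
  have hint : ∫ t in (0:ℝ)..T, (x t) ^ (1 - α) / (1 - α) = F T - F 0 :=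
    intervalIntegral.integral_eq_sub_of_hasDerivAt hderiv hcont
  rw [hint]
  have hFT : F T = X ^ (q + 1) / (k * (q + 1) * (1 - α)) := by
    rw [hF]; simp only []
    congr 2
    linarith [hkT]
  have hF0 : F 0 = c ^ (q + 1) / (k * (q + 1) * (1 - α)) := by
    simp [hF]
  rw [hFT, hF0]
  -- rpow computations
  have hXq : X ^ (q + 1) = xbar ^ (2 - α - γ) := by
    rw [hX, ← Real.rpow_mul (le_of_lt hxbar), hq1]
    congr 1
    field_simp
  have hcq : c ^ (q + 1) = b ^ (2 - α - γ) * xbar ^ (2 - α - γ) := by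
    rw [hc, ← Real.rpow_mul (le_of_lt hbx), hq1,
      Real.mul_rpow (le_of_lt hb0) (le_of_lt hxbar)]
    congr 2 <;> field_simp
  have hcb : c = b ^ (1 - γ) * X := by
    rw [hc, hX, Real.mul_rpow (le_of_lt hb0) (le_of_lt hxbar)]
  have hx2 : xbar ^ (2 - α - γ) = xbar ^ (1 - α) * X := by
    rw [hX, ← Real.rpow_add hxbar]
    congr 1; ring
  have hb1γ : (1:ℝ) - b ^ (1 - γ) ≠ 0 := by
    have : b ^ (1 - γ) < 1 := Real.rpow_lt_one (le_of_lt hb0) hb1 h1γ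
    linarith
  have hTval : T = X * (1 - b ^ (1 - γ)) / k := by
    have : k * T = X - c := hkT
    rw [hcb] at this
    field_simp
    linarith [this]
  rw [hXq, hcq, hx2, hTval, hq1]
  have hXne := ne_of_gt hXpos
  have hkne := ne_of_gt hkpos
  field_simp
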